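/- Let {X_k, F_k}_{k=0}^n be a real-valued martingale such that |X_k − X_{k-1}| ≤ d and E[(X_k − X_{k-1})² | F_{k-1}] ≤ σ² almost surely for all k ∈ {1,…,n}, where d, σ > 0. Let γ = σ²/d² and δ = α/d for α ≥ 0 with δ ≤ 1. Then P(|X_n − X_0| ≥ αn) ≤ 2 exp(−n · D((δ+γ)/(1+γ) ‖ γ/(1+γ))), where D(p‖q) = p ln(p/q) + (1−p) ln((1−p)/(1−q)). -/

import Mathlib

open MeasureTheory

/-- Binary Kullback–Leibler divergence between `(p, 1-p)` and `(q, 1-q)`. -/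
noncomputable def binaryKL (p q : ℝ) : ℝ :=
  p * Real.log (p / q) + (1 - p) * Real.log ((1 - p) / (1 - q))


lemma exp_taylor_int (s : ℝ) :
    Real.exp s - 1 - s = s ^ 2 * ∫ u in (0:ℝ)..1, (1 - u) * Real.exp (s * u) := by
  rcases eq_or_ne s 0 with rfl | hs
  · simp
  · have h : ∫ u in (0:ℝ)..1, (1 - u) * Real.exp (s * u)
        = (Real.exp s / s ^ 2) - (1 / s + 1 / s ^ 2) := by
      have := intervalIntegral.integral_eq_sub_of_hasDerivAt
        (f := fun u : ℝ => ((1 - u) / s + 1 / s ^ 2) * Real.exp (s * u))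
        (f' := fun u : ℝ => (1 - u) * Real.exp (s * u))
        (a := 0) (b := 1) ?_ ?_
      · rw [this]; field_simp; simp
      · intro u _
        have h1 : HasDerivAt (fun u : ℝ => (1 - u) / s + 1 / s ^ 2) (-1 / s) u := by
          have := (((hasDerivAt_id u).const_sub 1).div_const s).add_const (1 / s ^ 2)
          exact this
        have h2 : HasDerivAt (fun u : ℝ => Real.exp (s * u)) (s * Real.exp (s * u)) u := by
          exact ((Real.hasDerivAt_exp (s * u)).comp u
            ((hasDerivAt_id u).const_mul s)).congr_deriv (by simp [mul_comm])
        have := h1.mul h2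
        exact this.congr_deriv (by field_simp; ring)
      · apply Continuous.intervalIntegrable
        continuity
    rw [h]; field_simp; ring

lemma key_mono {z w : ℝ} (h : z ≤ w) :
    w ^ 2 * (Real.exp z - 1 - z) ≤ z ^ 2 * (Real.exp w - 1 - w) := by
  rw [exp_taylor_int z, exp_taylor_int w]
  rw [show w ^ 2 * (z ^ 2 * ∫ u in (0:ℝ)..1, (1 - u) * Real.exp (z * u))
      = (z ^ 2 * w ^ 2) * ∫ u in (0:ℝ)..1, (1 - u) * Real.exp (z * u) by ring,
    show z ^ 2 * (w ^ 2 * ∫ u in (0:ℝ)..1, (1 - u) * Real.exp (w * u))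
      = (z ^ 2 * w ^ 2) * ∫ u in (0:ℝ)..1, (1 - u) * Real.exp (w * u) by ring]
  apply mul_le_mul_of_nonneg_left _ (by positivity)
  apply intervalIntegral.integral_mono_on zero_le_one
  · apply Continuous.intervalIntegrable; continuity
  · apply Continuous.intervalIntegrable; continuity
  · intro u hu
    have : z * u ≤ w * u := mul_le_mul_of_nonneg_right h hu.1
    have h1 : (0:ℝ) ≤ 1 - u := by linarith [hu.2]
    exact mul_le_mul_of_nonneg_left (Real.exp_le_exp.2 this) h1

lemma quad_bound {z w : ℝ} (hzw : z ≤ w) (hw : 0 < w) :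
    Real.exp z ≤ 1 + z + (Real.exp w - 1 - w) * z ^ 2 / w ^ 2 := by
  have hk := key_mono hzw
  have h2 : Real.exp z - 1 - z ≤ (Real.exp w - 1 - w) * z ^ 2 / w ^ 2 := by
    rw [le_div_iff₀ (by positivity)]
    linear_combination hk
  linarith

lemma dominator {t d a y : ℝ} (ht : 0 < t) (hd : 0 < d) (ha : 0 < a) (hy : y ≤ d) :
    Real.exp (t * y) ≤ Real.exp (-(t * a)) * (1 + t * (y + a)) +
      (Real.exp (t * d) - Real.exp (-(t * a)) * (1 + t * (d + a))) / (d + a) ^ 2 * (y + a) ^ 2 := by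
  have hda : (0:ℝ) < d + a := by linarith
  have hw : 0 < t * (d + a) := by positivity
  have hzw : t * (y + a) ≤ t * (d + a) :=
    mul_le_mul_of_nonneg_left (by linarith) ht.le
  have key := quad_bound hzw hw
  have hexpy : Real.exp (t * y) = Real.exp (-(t * a)) * Real.exp (t * (y + a)) := by
    rw [← Real.exp_add]; ring_nf
  have hexpd : Real.exp (t * d) = Real.exp (-(t * a)) * Real.exp (t * (d + a)) := by
    rw [← Real.exp_add]; ring_nf
  rw [hexpy, hexpd]
  have hrw : (Real.exp (-(t * a)) * Real.exp (t * (d + a)) -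
        Real.exp (-(t * a)) * (1 + t * (d + a))) / (d + a) ^ 2 * (y + a) ^ 2
      = Real.exp (-(t * a)) *
        ((Real.exp (t * (d + a)) - 1 - t * (d + a)) * (t * (y + a)) ^ 2 / (t * (d + a)) ^ 2) := by
    field_simp
    ring
  rw [hrw]
  have h3 := mul_le_mul_of_nonneg_left key (Real.exp_pos (-(t * a))).le
  refine le_trans h3 (le_of_eq (by ring))

lemma c_nonneg {t d a : ℝ} (ht : 0 ≤ t) (hda : 0 < d + a) :
    0 ≤ (Real.exp (t * d) - Real.exp (-(t * a)) * (1 + t * (d + a))) / (d + a) ^ 2 := by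
  apply div_nonneg _ (by positivity)
  have h1 : Real.exp (t * d) = Real.exp (-(t * a)) * Real.exp (t * (d + a)) := by
    rw [← Real.exp_add]; ring_nf
  rw [h1]
  have h2 : 1 + t * (d + a) ≤ Real.exp (t * (d + a)) := by
    have := Real.add_one_le_exp (t * (d + a)); linarith
  nlinarith [Real.exp_pos (-(t * a))]

lemma cond_mgf {Ω : Type*} {m0 : MeasurableSpace Ω} (μ : Measure Ω) [IsProbabilityMeasure μ]
    {m : MeasurableSpace Ω} (hm : m ≤ m0) {Y : Ω → ℝ} (hYm : Measurable[m0] Y)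
    {t d σ : ℝ} (ht : 0 < t) (hd : 0 < d) (hσ : 0 < σ)
    (hYb : ∀ᵐ ω ∂μ, |Y ω| ≤ d)
    (hY0 : μ[Y|m] =ᵐ[μ] 0)
    (hY2 : ∀ᵐ ω ∂μ, (μ[(fun ω' => Y ω' ^ 2)|m]) ω ≤ σ ^ 2) :
    ∀ᵐ ω ∂μ, (μ[(fun ω' => Real.exp (t * Y ω'))|m]) ω ≤
      (σ ^ 2 / d ^ 2 * Real.exp (t * d) + Real.exp (-(t * (σ ^ 2 / d)))) / (1 + σ ^ 2 / d ^ 2) := by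
  set a : ℝ := σ ^ 2 / d with ha_def
  have ha : 0 < a := by positivity
  have hda : 0 < d + a := by linarith
  set c : ℝ := (Real.exp (t * d) - Real.exp (-(t * a)) * (1 + t * (d + a))) / (d + a) ^ 2
    with hc_def
  have hc : 0 ≤ c := c_nonneg ht.le hda
  set A : ℝ := Real.exp (-(t * a)) * (1 + t * a) + c * a ^ 2 with hA_def
  set B : ℝ := Real.exp (-(t * a)) * t + c * (2 * a) with hB_def
  -- pointwise bound
  have hpt : ∀ y : ℝ, y ≤ d → Real.exp (t * y) ≤ A + B * y + c * y ^ 2 := by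
    intro y hy
    have h := dominator ht hd ha hy
    refine h.trans (le_of_eq ?_)
    rw [hA_def, hB_def, hc_def]
    ring
  -- integrability
  have hYint : Integrable Y μ :=
    (integrable_const d).mono' (hYm.aestronglyMeasurable (μ := μ))
      (by filter_upwards [hYb] with ω h using by simpa using h)
  have hY2int : Integrable (fun ω' => Y ω' ^ 2) μ := by
    refine (integrable_const (d ^ 2)).mono' (hYm.pow_const 2).aestronglyMeasurable ?_
    filter_upwards [hYb] with ω h
    have : |Y ω| ^ 2 ≤ d ^ 2 := pow_le_pow_left₀ (abs_nonneg _) h 2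
    simpa [abs_pow, _root_.sq_abs] using this
  have hexpint : Integrable (fun ω' => Real.exp (t * Y ω')) μ := by
    refine (integrable_const (Real.exp (t * d))).mono'
      (Real.measurable_exp.comp (hYm.const_mul t)).aestronglyMeasurable ?_
    filter_upwards [hYb] with ω h
    rw [Real.norm_eq_abs, abs_of_pos (Real.exp_pos _)]
    exact Real.exp_le_exp.2 (mul_le_mul_of_nonneg_left (le_of_abs_le h) ht.le)
  -- the quadratic function
  have hφint : Integrable (fun ω' => A + B * Y ω' + c * Y ω' ^ 2) μ :=
    ((integrable_const A).add (hYint.const_mul B)).add (hY2int.const_mul c)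
  -- condexp of quadratic
  have hsum : μ[(fun ω' => A + B * Y ω' + c * Y ω' ^ 2)|m] =ᵐ[μ]
      (fun _ => A) + B • μ[Y|m] + c • μ[(fun ω' => Y ω' ^ 2)|m] := by
    have h1 : (fun ω' => A + B * Y ω' + c * Y ω' ^ 2)
        = ((fun _ => A) + B • Y + c • (fun ω' => Y ω' ^ 2)) := by
      funext ω; simp [smul_eq_mul]
    rw [h1]
    refine (condExp_add ((integrable_const A).add (hYint.smul B)) (hY2int.smul c) m).trans ?_
    have h2 := condExp_add (μ := μ) (integrable_const A) (hYint.smul B) m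
    filter_upwards [h2, condExp_smul (μ := μ) B Y m,
      condExp_smul (μ := μ) c (fun ω' => Y ω' ^ 2) m] with ω e1 e2 e3
    simp only [Pi.add_apply] at *
    rw [e1, e2, e3, condExp_const (μ := μ) hm A]
  -- monotonicity
  have hmono : μ[(fun ω' => Real.exp (t * Y ω'))|m] ≤ᵐ[μ]
      μ[(fun ω' => A + B * Y ω' + c * Y ω' ^ 2)|m] := by
    refine condExp_mono hexpint hφint ?_
    filter_upwards [hYb] with ω h
    exact hpt (Y ω) (le_of_abs_le h)
  -- combine
  filter_upwards [hmono, hsum, hY0, hY2] with ω h1 h2 h3 h4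
  have h5 : (μ[(fun ω' => Real.exp (t * Y ω'))|m]) ω ≤
      A + B * 0 + c * σ ^ 2 := by
    rw [h2] at h1
    simp only [Pi.add_apply, Pi.smul_apply, smul_eq_mul] at h1
    have : c * (μ[(fun ω' => Y ω' ^ 2)|m]) ω ≤ c * σ ^ 2 :=
      mul_le_mul_of_nonneg_left h4 hc
    have h3' : (μ[Y|m]) ω = 0 := h3
    rw [h3'] at h1
    linarith
  refine h5.trans (le_of_eq ?_)
  rw [hA_def, hc_def, ha_def]
  have hd2 : d ^ 2 ≠ 0 := by positivity
  have h6 : (d + σ ^ 2 / d) ^ 2 ≠ 0 := by positivity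
  field_simp
  ring

section Main
variable {Ω : Type*} {m0 : MeasurableSpace Ω} (μ : Measure Ω) [IsProbabilityMeasure μ]
  (ℱ : Filtration ℕ m0) (X : ℕ → Ω → ℝ)

lemma mgf_le (hmart : Martingale X ℱ μ)
    (n : ℕ) {d σ t : ℝ} (ht : 0 < t) (hd : 0 < d) (hσ : 0 < σ)
    (hbdd : ∀ k, 1 ≤ k → k ≤ n → ∀ᵐ ω ∂μ, |X k ω - X (k - 1) ω| ≤ d)
    (hvar : ∀ k, 1 ≤ k → k ≤ n →
      ∀ᵐ ω ∂μ, (μ[(fun ω' => (X k ω' - X (k - 1) ω') ^ 2) | ℱ (k - 1)]) ω ≤ σ ^ 2) :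
    ∀ k, k ≤ n → ∫ ω, Real.exp (t * (X k ω - X 0 ω)) ∂μ ≤
      ((σ ^ 2 / d ^ 2 * Real.exp (t * d) + Real.exp (-(t * (σ ^ 2 / d)))) /
        (1 + σ ^ 2 / d ^ 2)) ^ k := by
  set M : ℝ := (σ ^ 2 / d ^ 2 * Real.exp (t * d) + Real.exp (-(t * (σ ^ 2 / d)))) /
      (1 + σ ^ 2 / d ^ 2) with hM_def
  have hM : 0 < M := by positivity
  have hXm : ∀ k, Measurable[m0] (X k) :=
    fun k => ((hmart.stronglyAdapted k).measurable).mono (ℱ.le k) le_rfl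
  have hXb : ∀ k, k ≤ n → ∀ᵐ ω ∂μ, |X k ω - X 0 ω| ≤ k * d := by
    intro k
    induction k with
    | zero => intro _; filter_upwards with ω; simp
    | succ k ih =>
      intro hk
      have h1 := hbdd (k + 1) (by omega) hk
      simp only [Nat.add_sub_cancel] at h1
      filter_upwards [h1, ih (by omega)] with ω e1 e2
      have := abs_sub_le (X (k + 1) ω) (X k ω) (X 0 ω)
      push_cast
      nlinarith
  have hIk : ∀ k, k ≤ n → Integrable (fun ω => Real.exp (t * (X k ω - X 0 ω))) μ := by
    intro k hk
    refine (integrable_const (Real.exp (t * (k * d)))).mono'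
      (Real.measurable_exp.comp (((hXm k).sub (hXm 0)).const_mul t)).aestronglyMeasurable ?_
    filter_upwards [hXb k hk] with ω h
    rw [Real.norm_eq_abs, abs_of_pos (Real.exp_pos _)]
    exact Real.exp_le_exp.2 (mul_le_mul_of_nonneg_left (le_of_abs_le h) ht.le)
  intro k
  induction k with
  | zero => intro _; simp
  | succ k ih =>
    intro hk
    have hkn : k ≤ n := by omega
    have ihk := ih hkn
    set f : Ω → ℝ := fun ω => Real.exp (t * (X k ω - X 0 ω)) with hf_def
    set g : Ω → ℝ := fun ω => Real.exp (t * (X (k + 1) ω - X k ω)) with hg_def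
    have hfsm : StronglyMeasurable[ℱ k] f := by
      apply Real.continuous_exp.comp_stronglyMeasurable
      exact (((hmart.stronglyAdapted k).sub ((hmart.stronglyAdapted 0).mono (ℱ.mono (Nat.zero_le k)))).const_mul t)
    have hfb : ∀ᵐ ω ∂μ, ‖f ω‖ ≤ Real.exp (t * (k * d)) := by
      filter_upwards [hXb k hkn] with ω h
      rw [Real.norm_eq_abs, abs_of_pos (Real.exp_pos _)]
      exact Real.exp_le_exp.2 (mul_le_mul_of_nonneg_left (le_of_abs_le h) ht.le)
    -- conditional mgf for increment
    have hbdd1 := hbdd (k + 1) (by omega) hk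
    have hvar1 := hvar (k + 1) (by omega) hk
    simp only [Nat.add_sub_cancel] at hbdd1 hvar1
    have hY0 : μ[(fun ω => X (k + 1) ω - X k ω)|ℱ k] =ᵐ[μ] 0 := by
      have h1 := condExp_sub (μ := μ) (hmart.integrable (k + 1)) (hmart.integrable k) (ℱ k)
      have h2 := hmart.condExp_ae_eq (Nat.le_succ k)
      have h3 := hmart.condExp_ae_eq (le_refl k)
      filter_upwards [h1, h2, h3] with ω e1 e2 e3
      have : (fun ω => X (k + 1) ω - X k ω) = X (k + 1) - X k := rfl
      rw [this, e1]
      simp only [Pi.sub_apply, Pi.zero_apply]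
      rw [e2, e3]
      ring
    have hcond := cond_mgf μ (ℱ.le k) ((hXm (k + 1)).sub (hXm k)) ht hd hσ hbdd1 hY0 hvar1
    have hgint : Integrable g μ := by
      refine (integrable_const (Real.exp (t * d))).mono'
        (Real.measurable_exp.comp (((hXm (k + 1)).sub (hXm k)).const_mul t)).aestronglyMeasurable ?_
      filter_upwards [hbdd1] with ω h
      rw [Real.norm_eq_abs, abs_of_pos (Real.exp_pos _)]
      exact Real.exp_le_exp.2 (mul_le_mul_of_nonneg_left (le_of_abs_le h) ht.le)
    have hfg : (fun ω => Real.exp (t * (X (k + 1) ω - X 0 ω))) = f * g := by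
      funext ω
      simp only [Pi.mul_apply, hf_def, hg_def, ← Real.exp_add]
      ring_nf
    have hfgint : Integrable (f * g) μ := by rw [← hfg]; exact hIk (k + 1) hk
    have hpull := condExp_stronglyMeasurable_mul_of_bound (ℱ.le k) hfsm hgint
      (Real.exp (t * (k * d))) hfb
    calc ∫ ω, Real.exp (t * (X (k + 1) ω - X 0 ω)) ∂μ
        = ∫ ω, (f * g) ω ∂μ := by rw [hfg]
      _ = ∫ ω, (μ[f * g|ℱ k]) ω ∂μ := (integral_condExp (ℱ.le k)).symm
      _ ≤ ∫ ω, f ω * M ∂μ := by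
          apply integral_mono_ae
          · exact integrable_condExp
          · exact (hIk k hkn).mul_const M
          · filter_upwards [hpull, hcond] with ω e1 e2
            rw [e1]
            simp only [Pi.mul_apply]
            have hf0 : 0 ≤ f ω := (Real.exp_pos _).le
            have : (μ[g|ℱ k]) ω ≤ M := e2
            exact mul_le_mul_of_nonneg_left this hf0
      _ = (∫ ω, f ω ∂μ) * M := integral_mul_const M f
      _ ≤ M ^ k * M := mul_le_mul_of_nonneg_right ihk hM.le
      _ = M ^ (k + 1) := by rw [pow_succ]

lemma chernoff (hmart : Martingale X ℱ μ)
    (n : ℕ) {d σ t α : ℝ} (ht : 0 < t) (hd : 0 < d) (hσ : 0 < σ) (hα : 0 ≤ α)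
    (hbdd : ∀ k, 1 ≤ k → k ≤ n → ∀ᵐ ω ∂μ, |X k ω - X (k - 1) ω| ≤ d)
    (hvar : ∀ k, 1 ≤ k → k ≤ n →
      ∀ᵐ ω ∂μ, (μ[(fun ω' => (X k ω' - X (k - 1) ω') ^ 2) | ℱ (k - 1)]) ω ≤ σ ^ 2) :
    (μ {ω | α * n ≤ X n ω - X 0 ω}).toReal ≤
      (Real.exp (-(t * α)) * ((σ ^ 2 / d ^ 2 * Real.exp (t * d) +
        Real.exp (-(t * (σ ^ 2 / d)))) / (1 + σ ^ 2 / d ^ 2))) ^ n := by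
  set M : ℝ := (σ ^ 2 / d ^ 2 * Real.exp (t * d) + Real.exp (-(t * (σ ^ 2 / d)))) /
      (1 + σ ^ 2 / d ^ 2) with hM_def
  have hM : 0 < M := by positivity
  have hmgf := mgf_le μ ℱ X hmart n ht hd hσ hbdd hvar n le_rfl
  have hint : Integrable (fun ω => Real.exp (t * (X n ω - X 0 ω))) μ := by
    have hXm : ∀ k, Measurable[m0] (X k) :=
      fun k => ((hmart.stronglyAdapted k).measurable).mono (ℱ.le k) le_rfl
    have hXb : ∀ᵐ ω ∂μ, |X n ω - X 0 ω| ≤ n * d := by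
      have : ∀ k, k ≤ n → ∀ᵐ ω ∂μ, |X k ω - X 0 ω| ≤ k * d := by
        intro k
        induction k with
        | zero => intro _; filter_upwards with ω; simp
        | succ k ih =>
          intro hk
          have h1 := hbdd (k + 1) (by omega) hk
          simp only [Nat.add_sub_cancel] at h1
          filter_upwards [h1, ih (by omega)] with ω e1 e2
          have := abs_sub_le (X (k + 1) ω) (X k ω) (X 0 ω)
          push_cast
          nlinarith
      exact this n le_rfl
    refine (integrable_const (Real.exp (t * (n * d)))).mono'
      (Real.measurable_exp.comp (((hXm n).sub (hXm 0)).const_mul t)).aestronglyMeasurable ?_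
    filter_upwards [hXb] with ω h
    rw [Real.norm_eq_abs, abs_of_pos (Real.exp_pos _)]
    exact Real.exp_le_exp.2 (mul_le_mul_of_nonneg_left (le_of_abs_le h) ht.le)
  have hmarkov := ProbabilityTheory.measure_ge_le_exp_mul_mgf (μ := μ)
    (X := fun ω => X n ω - X 0 ω) (α * n) ht.le hint
  refine hmarkov.trans ?_
  have hmgf' : ProbabilityTheory.mgf (fun ω => X n ω - X 0 ω) μ t ≤ M ^ n := hmgf
  calc Real.exp (-t * (α * n)) * ProbabilityTheory.mgf (fun ω => X n ω - X 0 ω) μ t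
      ≤ Real.exp (-t * (α * n)) * M ^ n :=
        mul_le_mul_of_nonneg_left hmgf' (Real.exp_pos _).le
    _ = (Real.exp (-(t * α)) * M) ^ n := by
        rw [mul_pow, ← Real.exp_nat_mul]
        ring_nf

lemma opt_eq {d σ α : ℝ} (hd : 0 < d) (hσ : 0 < σ) (hα : 0 < α) (hαd : α / d < 1) :
    ∃ t : ℝ, 0 < t ∧
      Real.exp (-(t * α)) * ((σ ^ 2 / d ^ 2 * Real.exp (t * d) +
          Real.exp (-(t * (σ ^ 2 / d)))) / (1 + σ ^ 2 / d ^ 2)) =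
      Real.exp (-(binaryKL ((α / d + σ ^ 2 / d ^ 2) / (1 + σ ^ 2 / d ^ 2))
        ((σ ^ 2 / d ^ 2) / (1 + σ ^ 2 / d ^ 2)))) := by
  set γ : ℝ := σ ^ 2 / d ^ 2 with hγdef
  set δ : ℝ := α / d with hδdef
  have hγ0 : 0 < γ := by positivity
  have hδ0 : 0 < δ := by positivity
  have hδ1 : δ < 1 := hαd
  have h1δ : 0 < 1 - δ := by linarith
  have h1γ : 0 < 1 + γ := by linarith
  have hδγ : 0 < δ + γ := by linarith
  set E : ℝ := (δ + γ) / (γ * (1 - δ)) with hEdef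
  have hE0 : 0 < E := by positivity
  have hE1 : 1 < E := by
    rw [hEdef, lt_div_iff₀ (by positivity)]
    nlinarith
  set ℓ : ℝ := Real.log E with hℓdef
  have hℓ0 : 0 < ℓ := Real.log_pos hE1
  refine ⟨ℓ / (d * (1 + γ)), by positivity, ?_⟩
  set t : ℝ := ℓ / (d * (1 + γ)) with htdef
  have hd0 : d ≠ 0 := ne_of_gt hd
  have h1γ0 : (1 + γ) ≠ 0 := ne_of_gt h1γ
  have htd : t * d = ℓ / (1 + γ) := by rw [htdef]; field_simp
  have hta : t * (σ ^ 2 / d) = γ * ℓ / (1 + γ) := by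
    rw [htdef, hγdef]; field_simp
  have htα : t * α = δ * ℓ / (1 + γ) := by
    rw [htdef, hδdef]; field_simp
  have hexpℓ : Real.exp ℓ = E := Real.exp_log hE0
  set p : ℝ := (δ + γ) / (1 + γ) with hpdef
  set q : ℝ := γ / (1 + γ) with hqdef
  have hpq : p / q = (δ + γ) / γ := by
    rw [hpdef, hqdef]; field_simp
  have hpq2 : (1 - p) / (1 - q) = 1 - δ := by
    rw [hpdef, hqdef]; field_simp; ring
  have hKL : binaryKL p q = p * Real.log ((δ + γ) / γ) + (1 - p) * Real.log (1 - δ) := by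
    rw [binaryKL, hpq, hpq2]
  have hℓsplit : ℓ = Real.log ((δ + γ) / γ) - Real.log (1 - δ) := by
    rw [hℓdef, hEdef, show (δ + γ) / (γ * (1 - δ)) = ((δ + γ) / γ) / (1 - δ) by
      rw [div_div]]
    exact Real.log_div (by positivity) (ne_of_gt h1δ)
  rw [htα, htd, hta]
  have key1 : Real.exp (ℓ / (1 + γ)) = Real.exp (-(γ * ℓ / (1 + γ))) * E := by
    rw [← hexpℓ, ← Real.exp_add]
    congr 1
    field_simp
    ring
  rw [key1]
  have key2 : γ * (Real.exp (-(γ * ℓ / (1 + γ))) * E) + Real.exp (-(γ * ℓ / (1 + γ)))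
      = Real.exp (-(γ * ℓ / (1 + γ))) * ((1 + γ) / (1 - δ)) := by
    have h : γ * E + 1 = (1 + γ) / (1 - δ) := by
      rw [hEdef]; field_simp; ring
    calc γ * (Real.exp (-(γ * ℓ / (1 + γ))) * E) + Real.exp (-(γ * ℓ / (1 + γ)))
        = Real.exp (-(γ * ℓ / (1 + γ))) * (γ * E + 1) := by ring
      _ = _ := by rw [h]
  rw [key2]
  have key3 : Real.exp (-(δ * ℓ / (1 + γ))) *
      (Real.exp (-(γ * ℓ / (1 + γ))) * ((1 + γ) / (1 - δ)) / (1 + γ))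
      = Real.exp (-(p * ℓ) - Real.log (1 - δ)) := by
    rw [Real.exp_sub, Real.exp_log h1δ]
    rw [show Real.exp (-(p * ℓ)) = Real.exp (-(δ * ℓ / (1 + γ))) * Real.exp (-(γ * ℓ / (1 + γ)))
      from by rw [← Real.exp_add]; congr 1; rw [hpdef]; field_simp; ring]
    field_simp
  rw [key3]
  congr 1
  rw [hKL, hℓsplit]
  ring

lemma one_sided {Ω : Type*} {m0 : MeasurableSpace Ω} (μ : Measure Ω) [IsProbabilityMeasure μ]
    (ℱ : Filtration ℕ m0) (X : ℕ → Ω → ℝ) (hmart : Martingale X ℱ μ)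
    (n : ℕ) {d σ : ℝ} (hd : 0 < d) (hσ : 0 < σ)
    (hbdd : ∀ k, 1 ≤ k → k ≤ n → ∀ᵐ ω ∂μ, |X k ω - X (k - 1) ω| ≤ d)
    (hvar : ∀ k, 1 ≤ k → k ≤ n →
      ∀ᵐ ω ∂μ, (μ[(fun ω' => (X k ω' - X (k - 1) ω') ^ 2) | ℱ (k - 1)]) ω ≤ σ ^ 2)
    {α : ℝ} (hα : 0 ≤ α) (hδ : α / d ≤ 1) :
    (μ {ω | α * n ≤ X n ω - X 0 ω}).toReal ≤
      Real.exp (-(n : ℝ) *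
        binaryKL ((α / d + σ ^ 2 / d ^ 2) / (1 + σ ^ 2 / d ^ 2))
          ((σ ^ 2 / d ^ 2) / (1 + σ ^ 2 / d ^ 2))) := by
  have hγ0 : (0:ℝ) < σ ^ 2 / d ^ 2 := by positivity
  have h1γ : (0:ℝ) < 1 + σ ^ 2 / d ^ 2 := by linarith
  rcases eq_or_lt_of_le hα with hα0 | hα0
  · -- α = 0 : trivial since KL = 0
    subst hα0
    have hq0 : (0:ℝ) < σ ^ 2 / d ^ 2 / (1 + σ ^ 2 / d ^ 2) := by positivity
    have h1q : (0:ℝ) < 1 - σ ^ 2 / d ^ 2 / (1 + σ ^ 2 / d ^ 2) := by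
      have : σ ^ 2 / d ^ 2 / (1 + σ ^ 2 / d ^ 2) < 1 := by
        rw [div_lt_one h1γ]; linarith
      linarith
    have hKL : binaryKL ((0 / d + σ ^ 2 / d ^ 2) / (1 + σ ^ 2 / d ^ 2))
        ((σ ^ 2 / d ^ 2) / (1 + σ ^ 2 / d ^ 2)) = 0 := by
      simp only [zero_div, zero_add, binaryKL]
      rw [div_self (ne_of_gt hq0), Real.log_one, mul_zero, zero_add,
        div_self (ne_of_gt h1q), Real.log_one, mul_zero]
    rw [hKL, mul_zero, Real.exp_zero]
    exact le_trans (ENNReal.toReal_mono ENNReal.one_ne_top prob_le_one) (by simp)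
  · rcases lt_or_eq_of_le hδ with hlt | heq
    · obtain ⟨t, ht, heq2⟩ := opt_eq hd hσ hα0 hlt
      refine (chernoff μ ℱ X hmart n ht hd hσ hα hbdd hvar).trans ?_
      rw [heq2, ← Real.exp_nat_mul]
      exact le_of_eq (by rw [show (n : ℝ) * -(binaryKL ((α / d + σ ^ 2 / d ^ 2) /
        (1 + σ ^ 2 / d ^ 2)) (σ ^ 2 / d ^ 2 / (1 + σ ^ 2 / d ^ 2)))
        = -(n : ℝ) * binaryKL ((α / d + σ ^ 2 / d ^ 2) / (1 + σ ^ 2 / d ^ 2))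
          (σ ^ 2 / d ^ 2 / (1 + σ ^ 2 / d ^ 2)) by ring])
    · -- α = d : take the limit t → ∞
      have hαd : α = d := by
        field_simp at heq; linarith [heq]
      subst hαd
      have key : ∀ t : ℝ, 0 < t → (μ {ω | α * n ≤ X n ω - X 0 ω}).toReal ≤
          ((σ ^ 2 / α ^ 2 + Real.exp (-(t * (α * (1 + σ ^ 2 / α ^ 2))))) /
            (1 + σ ^ 2 / α ^ 2)) ^ n := by
        intro t ht
        refine (chernoff μ ℱ X hmart n ht (by linarith : (0:ℝ) < α) hσ hα hbdd hvar).trans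
          (le_of_eq ?_)
        congr 1
        have e1 : Real.exp (-(t * α)) * Real.exp (t * α) = 1 := by
          rw [← Real.exp_add]; simp
        have e2 : Real.exp (-(t * α)) * Real.exp (-(t * (σ ^ 2 / α))) =
            Real.exp (-(t * (α * (1 + σ ^ 2 / α ^ 2)))) := by
          rw [← Real.exp_add]; congr 1; field_simp; ring
        calc Real.exp (-(t * α)) * ((σ ^ 2 / α ^ 2 * Real.exp (t * α) +
              Real.exp (-(t * (σ ^ 2 / α)))) / (1 + σ ^ 2 / α ^ 2))
            = (σ ^ 2 / α ^ 2 * (Real.exp (-(t * α)) * Real.exp (t * α)) +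
              Real.exp (-(t * α)) * Real.exp (-(t * (σ ^ 2 / α)))) / (1 + σ ^ 2 / α ^ 2) := by
              ring
          _ = _ := by rw [e1, e2, mul_one]
      have hlim : Filter.Tendsto (fun t : ℝ =>
          ((σ ^ 2 / α ^ 2 + Real.exp (-(t * (α * (1 + σ ^ 2 / α ^ 2))))) /
            (1 + σ ^ 2 / α ^ 2)) ^ n) Filter.atTop
          (nhds (((σ ^ 2 / α ^ 2 + 0) / (1 + σ ^ 2 / α ^ 2)) ^ n)) := by
        refine Filter.Tendsto.pow (Filter.Tendsto.div_const (Filter.Tendsto.const_add _ ?_) _) n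
        have h1 : Filter.Tendsto (fun t : ℝ => t * (α * (1 + σ ^ 2 / α ^ 2)))
            Filter.atTop Filter.atTop :=
          Filter.Tendsto.atTop_mul_const (by positivity) Filter.tendsto_id
        exact Real.tendsto_exp_neg_atTop_nhds_zero.comp h1
      have hle : (μ {ω | α * n ≤ X n ω - X 0 ω}).toReal ≤
          ((σ ^ 2 / α ^ 2 + 0) / (1 + σ ^ 2 / α ^ 2)) ^ n :=
        ge_of_tendsto hlim (Filter.eventually_atTop.2 ⟨1, fun t ht => key t (by linarith)⟩)
      refine hle.trans (le_of_eq ?_)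
      have hp1 : (α / α + σ ^ 2 / α ^ 2) / (1 + σ ^ 2 / α ^ 2) = 1 := by
        rw [div_self (by linarith : α ≠ 0)]
        exact div_self (ne_of_gt h1γ)
      have hq0 : (0:ℝ) < σ ^ 2 / α ^ 2 / (1 + σ ^ 2 / α ^ 2) := by positivity
      have hKL1 : binaryKL 1 (σ ^ 2 / α ^ 2 / (1 + σ ^ 2 / α ^ 2)) =
          -Real.log (σ ^ 2 / α ^ 2 / (1 + σ ^ 2 / α ^ 2)) := by
        rw [binaryKL]
        rw [show (1:ℝ) - 1 = 0 by ring, zero_mul, add_zero, one_mul,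
          Real.log_div one_ne_zero (ne_of_gt hq0), Real.log_one]
        ring
      rw [hp1, hKL1, add_zero,
        show -(n:ℝ) * -Real.log (σ ^ 2 / α ^ 2 / (1 + σ ^ 2 / α ^ 2))
          = (n:ℝ) * Real.log (σ ^ 2 / α ^ 2 / (1 + σ ^ 2 / α ^ 2)) by ring,
        Real.exp_nat_mul, Real.exp_log hq0]

end Main

theorem stmt_13 {Ω : Type*} {m0 : MeasurableSpace Ω} (μ : Measure Ω)
    [IsProbabilityMeasure μ]
    (ℱ : Filtration ℕ m0) (X : ℕ → Ω → ℝ) (hmart : Martingale X ℱ μ)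
    (n : ℕ) (hn : 0 < n) (d σ : ℝ) (hd : 0 < d) (hσ : 0 < σ)
    (hbdd : ∀ k, 1 ≤ k → k ≤ n → ∀ᵐ ω ∂μ, |X k ω - X (k - 1) ω| ≤ d)
    (hvar : ∀ k, 1 ≤ k → k ≤ n →
      ∀ᵐ ω ∂μ, (μ[(fun ω' => (X k ω' - X (k - 1) ω') ^ 2) | ℱ (k - 1)]) ω ≤ σ ^ 2)
    (α : ℝ) (hα : 0 ≤ α) (hδ : α / d ≤ 1) :
    (μ {ω | α * n ≤ |X n ω - X 0 ω|}).toReal ≤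
      2 * Real.exp (-(n : ℝ) *
        binaryKL ((α / d + σ ^ 2 / d ^ 2) / (1 + σ ^ 2 / d ^ 2))
          ((σ ^ 2 / d ^ 2) / (1 + σ ^ 2 / d ^ 2))) := by
  set Y : ℕ → Ω → ℝ := fun k => -X k with hYdef
  have hmartY : Martingale Y ℱ μ := hmart.neg
  have hbddY : ∀ k, 1 ≤ k → k ≤ n → ∀ᵐ ω ∂μ, |Y k ω - Y (k - 1) ω| ≤ d := by
    intro k h1 h2
    filter_upwards [hbdd k h1 h2] with ω h
    have : Y k ω - Y (k - 1) ω = -(X k ω - X (k - 1) ω) := by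
      simp only [hYdef, Pi.neg_apply]; ring
    rw [this, abs_neg]
    exact h
  have hvarY : ∀ k, 1 ≤ k → k ≤ n →
      ∀ᵐ ω ∂μ, (μ[(fun ω' => (Y k ω' - Y (k - 1) ω') ^ 2) | ℱ (k - 1)]) ω ≤ σ ^ 2 := by
    intro k h1 h2
    have hfun : (fun ω' => (Y k ω' - Y (k - 1) ω') ^ 2)
        = (fun ω' => (X k ω' - X (k - 1) ω') ^ 2) := by
      funext ω'
      simp only [hYdef, Pi.neg_apply]
      ring
    rw [hfun]
    exact hvar k h1 h2
  have hone1 := one_sided μ ℱ X hmart n hd hσ hbdd hvar hα hδ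
  have hone2 := one_sided μ ℱ Y hmartY n hd hσ hbddY hvarY hα hδ
  have hsub : {ω | α * n ≤ |X n ω - X 0 ω|} ⊆
      {ω | α * n ≤ X n ω - X 0 ω} ∪ {ω | α * n ≤ Y n ω - Y 0 ω} := by
    intro ω hω
    have hω' : α * n ≤ |X n ω - X 0 ω| := hω
    rcases le_abs.mp hω' with h | h
    · exact Set.mem_union_left _ h
    · refine Set.mem_union_right _ ?_
      show α * n ≤ Y n ω - Y 0 ω
      have hy : Y n ω - Y 0 ω = -(X n ω - X 0 ω) := by
        simp only [hYdef, Pi.neg_apply]; ring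
      rw [hy]
      exact h
  have hm1 : μ {ω | α * n ≤ |X n ω - X 0 ω|} ≤
      μ {ω | α * n ≤ X n ω - X 0 ω} + μ {ω | α * n ≤ Y n ω - Y 0 ω} :=
    (measure_mono hsub).trans (measure_union_le _ _)
  have hfA := measure_ne_top μ {ω | α * n ≤ X n ω - X 0 ω}
  have hfB := measure_ne_top μ {ω | α * n ≤ Y n ω - Y 0 ω}
  have h2 := ENNReal.toReal_mono (ENNReal.add_ne_top.2 ⟨hfA, hfB⟩) hm1
  rw [ENNReal.toReal_add hfA hfB] at h2
  linarith
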